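/- For every α ∈ (0,2), every k ∈ {0,1,2}, and every s > 0, one has 0 ≤ ∫₀^∞ t^k·e^{−st}·γ(t) dt ≤ (2·√(2α)·(2−α)·Γ(k+1+α)/(α·π))·s^{−k−1−α}. In particular, the Laplace transform G(s) = ∫₀^∞ e^{−st}γ(t) dt satisfies G(s) ≤ (2·√(2α)·(2−α)·Γ(1+α)/(α·π))·s^{−1−α}. -/

import Mathlib

open MeasureTheory Real Set
open scoped ENNReal NNReal

/-- The density `γ` from Kwaśnicki's formula for eigenfunctions on the half-line;
the integrand in the exponent has a removable singularity at `r = 1/s` (a single point,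
hence negligible for the Lebesgue integral). -/
noncomputable def gammaFn (α : ℝ) (s : ℝ) : ℝ :=
  Real.sqrt (2 * α) * Real.sin (α * π / 2) / (2 * π) *
      (s ^ α / (1 + s ^ (2 * α) - 2 * s ^ α * Real.cos (α * π / 2))) *
    Real.exp ((1 / π) * ∫ r in Set.Ioi (0 : ℝ),
      (1 + r ^ 2)⁻¹ * Real.log ((1 - r ^ α * s ^ α) / (1 - r ^ 2 * s ^ 2)))

/-- `G` is the Laplace transform of `γ`. -/
noncomputable def GFn (α : ℝ) (s : ℝ) : ℝ :=
  ∫ t in Set.Ioi (0 : ℝ), Real.exp (-s * t) * gammaFn α t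

/-- The generalized eigenfunction profile on the half-line:
`F(s) = sin(s + (2−α)π/8) − G(s)` for `s > 0`, and `F(s) = 0` for `s ≤ 0`. -/
noncomputable def FFn (α : ℝ) (s : ℝ) : ℝ :=
  if 0 < s then Real.sin (s + (2 - α) * π / 8) - GFn α s else 0

/-- The auxiliary cut-off function `q`. -/
noncomputable def qFn (x : ℝ) : ℝ :=
  if x ≤ -(1/3) then 0
  else if x ≤ 0 then 9/2 * (x + 1/3) ^ 2
  else if x ≤ 1/3 then 1 - 9/2 * (x - 1/3) ^ 2
  else 1

/-- `μ_n = nπ/2 − (2−α)π/8`. -/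
noncomputable def muN (α : ℝ) (n : ℕ) : ℝ := n * π / 2 - (2 - α) * π / 8

/-- The approximate eigenfunction
`φ̃_n(x) = q(−x)·F(μ_n(1+x)) + (−1)^n·q(x)·F(μ_n(1−x))`. -/
noncomputable def phiTilde (α : ℝ) (n : ℕ) (x : ℝ) : ℝ :=
  qFn (-x) * FFn α (muN α n * (1 + x)) + (-1 : ℝ) ^ n * qFn x * FFn α (muN α n * (1 - x))


section Aux

open MeasureTheory Real Set

private lemma measurable_inner_integrand (α : ℝ) :
    Measurable fun p : ℝ × ℝ =>
      (1 + p.2 ^ 2)⁻¹ * Real.log ((1 - p.2 ^ α * p.1 ^ α) / (1 - p.2 ^ 2 * p.1 ^ 2)) := by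
  have h1 : Measurable fun p : ℝ × ℝ => p.1 ^ α := measurable_fst.pow_const α
  have h2 : Measurable fun p : ℝ × ℝ => p.2 ^ α := measurable_snd.pow_const α
  have h3 : Measurable fun p : ℝ × ℝ =>
      (1 - p.2 ^ α * p.1 ^ α) / (1 - p.2 ^ 2 * p.1 ^ 2) :=
    (measurable_const.sub (h2.mul h1)).div
      (measurable_const.sub ((measurable_snd.pow_const 2).mul (measurable_fst.pow_const 2)))
  exact ((measurable_const.add (measurable_snd.pow_const 2)).inv).mul
    (Real.measurable_log.comp h3)

private lemma gammaFn_measurable (α : ℝ) : Measurable (gammaFn α) := by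
  have hF : StronglyMeasurable (fun p : ℝ × ℝ =>
      (1 + p.2 ^ 2)⁻¹ * Real.log ((1 - p.2 ^ α * p.1 ^ α) / (1 - p.2 ^ 2 * p.1 ^ 2))) :=
    (measurable_inner_integrand α).stronglyMeasurable
  have hI : StronglyMeasurable fun t : ℝ => ∫ r in Set.Ioi (0 : ℝ),
      (1 + r ^ 2)⁻¹ * Real.log ((1 - r ^ α * t ^ α) / (1 - r ^ 2 * t ^ 2)) :=
    hF.integral_prod_right' (ν := volume.restrict (Set.Ioi (0 : ℝ)))
  unfold gammaFn
  have hdiv : Measurable fun t : ℝ =>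
      t ^ α / (1 + t ^ (2 * α) - 2 * t ^ α * Real.cos (α * π / 2)) :=
    (measurable_id.pow_const α).div
      ((measurable_const.add (measurable_id.pow_const (2 * α))).sub
        ((measurable_const.mul (measurable_id.pow_const α)).mul measurable_const))
  exact (measurable_const.mul hdiv).mul
    (Real.measurable_exp.comp (measurable_const.mul hI.measurable))

private lemma log_ratio_nonpos {α : ℝ} (hα : α ∈ Set.Ioo (0 : ℝ) 2) {x : ℝ} (hx : 0 < x) :
    Real.log ((1 - x ^ α) / (1 - x ^ 2)) ≤ 0 := by
  obtain ⟨hα0, hα2⟩ := hα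
  rcases lt_trichotomy x 1 with h | h | h
  · have hxa1 : x ^ α ≤ 1 := Real.rpow_le_one hx.le h.le hα0.le
    have h2a : x ^ (2 : ℝ) ≤ x ^ α := Real.rpow_le_rpow_of_exponent_ge hx h.le hα2.le
    rw [Real.rpow_two] at h2a
    have hx2 : x ^ 2 < 1 := by nlinarith
    exact Real.log_nonpos (div_nonneg (by linarith) (by linarith))
      ((div_le_one (by linarith)).2 (by linarith))
  · subst h; simp
  · have h1a : 1 ≤ x ^ α := Real.one_le_rpow h.le hα0.le
    have h2a : x ^ α ≤ x ^ (2 : ℝ) := Real.rpow_le_rpow_of_exponent_le h.le hα2.le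
    rw [Real.rpow_two] at h2a
    have hx2 : 1 < x ^ 2 := by nlinarith
    have heq : (1 - x ^ α) / (1 - x ^ 2) = (x ^ α - 1) / (x ^ 2 - 1) := by
      rw [← neg_div_neg_eq]; ring_nf
    rw [heq]
    exact Real.log_nonpos (div_nonneg (by linarith) (by linarith))
      ((div_le_one (by linarith)).2 (by linarith))

set_option maxHeartbeats 1000000 in
private lemma gammaFn_bounds {α : ℝ} (hα : α ∈ Set.Ioo (0 : ℝ) 2) {t : ℝ} (ht : 0 < t) :
    0 ≤ gammaFn α t ∧ gammaFn α t ≤ 2 * Real.sqrt (2 * α) * (2 - α) / (α * π) * t ^ α := by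
  obtain ⟨hα0, hα2⟩ := hα
  have hπ : 0 < π := Real.pi_pos
  have hθ0 : 0 < α * π / 2 := by positivity
  have hθπ : α * π / 2 < π := by nlinarith
  have hsin : 0 < Real.sin (α * π / 2) := Real.sin_pos_of_pos_of_lt_pi hθ0 hθπ
  have hx0 : 0 < t ^ α := Real.rpow_pos_of_pos ht α
  have h2a : t ^ (2 * α) = (t ^ α) ^ 2 := by
    rw [mul_comm (2 : ℝ) α, Real.rpow_mul ht.le, Real.rpow_two]
  have pyth : Real.sin (α * π / 2) ^ 2 + Real.cos (α * π / 2) ^ 2 = 1 :=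
    Real.sin_sq_add_cos_sq _
  set x := t ^ α with hxdef
  set c := Real.cos (α * π / 2) with hcdef
  set sn := Real.sin (α * π / 2) with hsdef
  set D := 1 + t ^ (2 * α) - 2 * x * c with hDdef
  have hDform : D = (x - c) ^ 2 + sn ^ 2 := by
    rw [hDdef, h2a]; nlinarith [pyth]
  have hDpos : 0 < D := by
    rw [hDform]; positivity
  -- the exponential factor is at most 1
  have hJ : (∫ r in Set.Ioi (0 : ℝ),
      (1 + r ^ 2)⁻¹ * Real.log ((1 - r ^ α * t ^ α) / (1 - r ^ 2 * t ^ 2))) ≤ 0 := by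
    apply setIntegral_nonpos measurableSet_Ioi
    intro r hr
    have hr0 : 0 < r := hr
    have hrt : 0 < r * t := mul_pos hr0 ht
    have hmul : r ^ α * t ^ α = (r * t) ^ α := (Real.mul_rpow hr0.le ht.le).symm
    have hmul2 : r ^ 2 * t ^ 2 = (r * t) ^ 2 := (mul_pow r t 2).symm
    rw [hmul, hmul2]
    have hlog := log_ratio_nonpos ⟨hα0, hα2⟩ hrt
    have hinv : (0 : ℝ) ≤ (1 + r ^ 2)⁻¹ := by positivity
    calc (1 + r ^ 2)⁻¹ * Real.log ((1 - (r * t) ^ α) / (1 - (r * t) ^ 2))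
        ≤ (1 + r ^ 2)⁻¹ * 0 := mul_le_mul_of_nonneg_left hlog hinv
      _ = 0 := mul_zero _
  have hE1 : Real.exp ((1 / π) * ∫ r in Set.Ioi (0 : ℝ),
      (1 + r ^ 2)⁻¹ * Real.log ((1 - r ^ α * t ^ α) / (1 - r ^ 2 * t ^ 2))) ≤ 1 := by
    rw [Real.exp_le_one_iff]
    have := mul_le_mul_of_nonneg_left hJ (by positivity : (0 : ℝ) ≤ 1 / π)
    simpa using this
  have hsq : (0 : ℝ) ≤ Real.sqrt (2 * α) := Real.sqrt_nonneg _
  -- key inequality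
  have hkey : sn * α ≤ 4 * (2 - α) * D := by
    by_cases hα1 : α ≤ 1
    · have hθhalf : α * π / 2 ≤ π / 2 := by nlinarith
      have hms := Real.mul_le_sin hθ0.le hθhalf
      have heq : 2 / π * (α * π / 2) = α := by field_simp
      rw [heq] at hms
      have hDsin : sn ^ 2 ≤ D := by rw [hDform]; nlinarith [sq_nonneg (x - c)]
      nlinarith [mul_le_mul_of_nonneg_left hms hsin.le, hDpos]
    · push_neg at hα1
      have hc : c ≤ 0 := by
        rw [hcdef]
        exact Real.cos_nonpos_of_pi_div_two_le_of_le (by nlinarith) (by nlinarith)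
      have hD1 : 1 ≤ D := by
        rw [hDform]
        nlinarith [pyth, mul_nonneg hx0.le (neg_nonneg.2 hc), sq_nonneg x]
      have hsle : sn ≤ (2 - α) * π / 2 := by
        have h1 : sn = Real.sin (π - α * π / 2) := by rw [hsdef, Real.sin_pi_sub]
        have h2 : Real.sin (π - α * π / 2) < π - α * π / 2 := Real.sin_lt (by nlinarith)
        have h3 : π - α * π / 2 = (2 - α) * π / 2 := by ring
        linarith [h1 ▸ h2, h3 ▸ le_refl ((2 - α) * π / 2)]
      have hpi4 : π ≤ 4 := Real.pi_le_four
      nlinarith [mul_le_mul_of_nonneg_right hsle hα0.le,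
        mul_nonneg (by linarith : (0 : ℝ) ≤ 2 - α) (by linarith : (0 : ℝ) ≤ D - 1),
        mul_nonneg (by linarith : (0 : ℝ) ≤ 2 - α) hα0.le]
  constructor
  · unfold gammaFn
    refine mul_nonneg (mul_nonneg ?_ ?_) (Real.exp_pos _).le
    · exact div_nonneg (mul_nonneg hsq hsin.le) (by positivity)
    · exact div_nonneg hx0.le hDpos.le
  · have hfirst : 0 ≤ Real.sqrt (2 * α) * sn / (2 * π) * (x / D) := by
      refine mul_nonneg (div_nonneg (mul_nonneg hsq hsin.le) (by positivity))
        (div_nonneg hx0.le hDpos.le)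
    have step1 : gammaFn α t ≤ Real.sqrt (2 * α) * sn / (2 * π) * (x / D) := by
      unfold gammaFn
      exact mul_le_of_le_one_right hfirst hE1
    have step2 : Real.sqrt (2 * α) * sn / (2 * π) * (x / D) ≤
        2 * Real.sqrt (2 * α) * (2 - α) / (α * π) * x := by
      rw [div_mul_div_comm, div_mul_eq_mul_div,
        div_le_div_iff₀ (by positivity) (by positivity)]
      have h := mul_le_mul_of_nonneg_left hkey
        (mul_nonneg (mul_nonneg hsq hx0.le) hπ.le)
      nlinarith [h]
    exact step1.trans step2

set_option maxHeartbeats 1000000 in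
private lemma laplace_aux {α : ℝ} (hα : α ∈ Set.Ioo (0 : ℝ) 2) (k : ℕ) {s : ℝ} (hs : 0 < s) :
    MeasureTheory.IntegrableOn
      (fun t : ℝ => t ^ k * Real.exp (-s * t) * gammaFn α t) (Set.Ioi 0) volume ∧
    0 ≤ ∫ t in Set.Ioi (0 : ℝ), t ^ k * Real.exp (-s * t) * gammaFn α t ∧
    (∫ t in Set.Ioi (0 : ℝ), t ^ k * Real.exp (-s * t) * gammaFn α t) ≤
      2 * Real.sqrt (2 * α) * (2 - α) * Real.Gamma ((k : ℝ) + 1 + α) / (α * π) *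
        s ^ (-(k : ℝ) - 1 - α) := by
  obtain ⟨hα0, hα2⟩ := hα
  have hπ : 0 < π := Real.pi_pos
  set C := 2 * Real.sqrt (2 * α) * (2 - α) / (α * π) with hC
  have hC0 : 0 ≤ C := by
    rw [hC]
    exact div_nonneg (mul_nonneg (by positivity) (by linarith)) (by positivity)
  have hknn : (0 : ℝ) ≤ (k : ℝ) := Nat.cast_nonneg k
  -- the dominating function
  have hg_int : MeasureTheory.IntegrableOn
      (fun t : ℝ => C * (t ^ ((k : ℝ) + α) * Real.exp (-s * t))) (Set.Ioi 0) volume := by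
    have h := integrableOn_rpow_mul_exp_neg_mul_rpow
      (show (-1 : ℝ) < (k : ℝ) + α by linarith) (p := 1) one_pos hs
    simp only [Real.rpow_one] at h
    exact h.const_mul C
  have hfg : ∀ t ∈ Set.Ioi (0 : ℝ),
      t ^ k * Real.exp (-s * t) * gammaFn α t ≤ C * (t ^ ((k : ℝ) + α) * Real.exp (-s * t)) := by
    intro t ht
    have ht0 : 0 < t := ht
    have hb := (gammaFn_bounds ⟨hα0, hα2⟩ ht0).2
    calc t ^ k * Real.exp (-s * t) * gammaFn α t
        ≤ t ^ k * Real.exp (-s * t) * (C * t ^ α) :=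
          mul_le_mul_of_nonneg_left hb (by positivity)
      _ = C * (t ^ ((k : ℝ) + α) * Real.exp (-s * t)) := by
          rw [Real.rpow_add ht0, Real.rpow_natCast]; ring
  have hf_nonneg : ∀ t ∈ Set.Ioi (0 : ℝ), 0 ≤ t ^ k * Real.exp (-s * t) * gammaFn α t := by
    intro t ht
    have ht0 : 0 < t := ht
    exact mul_nonneg (mul_nonneg (pow_nonneg ht0.le k) (Real.exp_pos _).le)
      (gammaFn_bounds ⟨hα0, hα2⟩ ht0).1
  have hf_meas : MeasureTheory.AEStronglyMeasurable
      (fun t : ℝ => t ^ k * Real.exp (-s * t) * gammaFn α t)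
      (volume.restrict (Set.Ioi (0 : ℝ))) := by
    refine Measurable.aestronglyMeasurable ?_
    exact ((measurable_id.pow_const k).mul
      (Real.measurable_exp.comp (measurable_const.mul measurable_id))).mul
        (gammaFn_measurable α)
  have hf_int : MeasureTheory.IntegrableOn
      (fun t : ℝ => t ^ k * Real.exp (-s * t) * gammaFn α t) (Set.Ioi 0) volume := by
    refine hg_int.mono' hf_meas ?_
    rw [MeasureTheory.ae_restrict_iff' measurableSet_Ioi]
    refine MeasureTheory.ae_of_all _ fun t ht => ?_
    rw [Real.norm_eq_abs, abs_of_nonneg (hf_nonneg t ht)]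
    exact hfg t ht
  refine ⟨hf_int, MeasureTheory.setIntegral_nonneg measurableSet_Ioi hf_nonneg, ?_⟩
  have hmono := MeasureTheory.setIntegral_mono_on hf_int hg_int measurableSet_Ioi hfg
  have hval : (∫ t in Set.Ioi (0 : ℝ), C * (t ^ ((k : ℝ) + α) * Real.exp (-s * t)))
      = C * ((1 / s) ^ ((k : ℝ) + 1 + α) * Real.Gamma ((k : ℝ) + 1 + α)) := by
    rw [MeasureTheory.integral_const_mul]
    congr 1
    have h := Real.integral_rpow_mul_exp_neg_mul_Ioi
      (show (0 : ℝ) < (k : ℝ) + 1 + α by linarith) hs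
    rw [show (k : ℝ) + 1 + α - 1 = (k : ℝ) + α by ring] at h
    simp only [neg_mul] at h ⊢
    exact h
  have hrw : (1 / s) ^ ((k : ℝ) + 1 + α) = s ^ (-(k : ℝ) - 1 - α) := by
    rw [one_div, Real.inv_rpow hs.le, ← Real.rpow_neg hs.le,
      show -((k : ℝ) + 1 + α) = -(k : ℝ) - 1 - α by ring]
  calc (∫ t in Set.Ioi (0 : ℝ), t ^ k * Real.exp (-s * t) * gammaFn α t)
      ≤ C * ((1 / s) ^ ((k : ℝ) + 1 + α) * Real.Gamma ((k : ℝ) + 1 + α)) :=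
        hval ▸ hmono
    _ = 2 * Real.sqrt (2 * α) * (2 - α) * Real.Gamma ((k : ℝ) + 1 + α) / (α * π) *
        s ^ (-(k : ℝ) - 1 - α) := by
        rw [hrw, hC]; ring

end Aux

/-- **Bounds on the Laplace transform of `γ` and its first two moments.**
For `α ∈ (0,2)`, `k ∈ {0,1,2}` and `s > 0`, the integral `∫₀^∞ t^k e^{−st} γ(t) dt`
converges, is nonnegative, and is at most `(2√(2α)(2−α)Γ(k+1+α)/(απ)) s^{−k−1−α}`.
In particular `G(s) ≤ (2√(2α)(2−α)Γ(1+α)/(απ)) s^{−1−α}`. -/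
theorem laplace_transform_gamma_bounds (α : ℝ) (hα : α ∈ Set.Ioo (0 : ℝ) 2)
    (k : ℕ) (hk : k ≤ 2) (s : ℝ) (hs : 0 < s) :
    (MeasureTheory.IntegrableOn
      (fun t : ℝ => t ^ k * Real.exp (-s * t) * gammaFn α t) (Set.Ioi 0) volume ∧
    0 ≤ ∫ t in Set.Ioi (0 : ℝ), t ^ k * Real.exp (-s * t) * gammaFn α t ∧
    (∫ t in Set.Ioi (0 : ℝ), t ^ k * Real.exp (-s * t) * gammaFn α t) ≤
      2 * Real.sqrt (2 * α) * (2 - α) * Real.Gamma ((k : ℝ) + 1 + α) / (α * π) *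
        s ^ (-(k : ℝ) - 1 - α)) ∧
    GFn α s ≤ 2 * Real.sqrt (2 * α) * (2 - α) * Real.Gamma (1 + α) / (α * π) *
      s ^ (-1 - α) := by
  refine ⟨laplace_aux hα k hs, ?_⟩
  have h := (laplace_aux hα 0 hs).2.2
  simp only [Nat.cast_zero, pow_zero, one_mul] at h
  rw [show (-(0:ℝ) - 1 - α) = -1 - α by ring, show ((0:ℝ) + 1 + α) = 1 + α by ring] at h
  rw [GFn]
  exact h
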